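/- arXiv:1710.08775 — 6 statements merged into one kernel-verified Lean document; each statement's English description precedes it below -/
import Mathlib

section
/- If X is separated from Y given Z in the moralization G^moral of a HEDG G, then X is d-separated from Y given Z in G. -/
namespace HedgPaper

variable {V : Type*}

/-- directed reachability: existence of a directed path (possibly trivial). -/
def Reach (E : V → V → Prop) : V → V → Prop := Relation.ReflTransGen E

/-- `v` and `w` lie in the same strongly connected component. -/
def InSC (E : V → V → Prop) (v w : V) : Prop := Reach E v w ∧ Reach E w v

/-- the set of ancestors of a set `Z`. -/
def AncSet (E : V → V → Prop) (Z : Set V) : Set V := {v | ∃ z ∈ Z, Reach E v z}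

/-- `H` is a simplicial complex over `V`. -/
def IsSimplicial (H : Set (Set V)) : Prop :=
  (∀ v : V, ({v} : Set V) ∈ H) ∧ ∀ F ∈ H, ∀ F' : Set V, F' ⊆ F → F' ∈ H

/-- direction of an edge on a path: forward, backward, or bidirected. -/
inductive EDir : Type
  | fwd | bwd | bi

/-- one step of a walk in a HEDG. -/
structure Step (V : Type*) where
  src : V
  dir : EDir
  dst : V

/-- the step is an actual (directed or bidirected) edge of the HEDG `(V,E,H)`. -/
def Step.Valid (E : V → V → Prop) (H : Set (Set V)) (s : Step V) : Prop :=
  match s.dir with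
  | .fwd => E s.src s.dst
  | .bwd => E s.dst s.src
  | .bi  => s.src ≠ s.dst ∧ ({s.src, s.dst} : Set V) ∈ H

/-- the step has an arrowhead at its destination. -/
def Step.HeadAtDst (s : Step V) : Prop := s.dir = EDir.fwd ∨ s.dir = EDir.bi

/-- the step has an arrowhead at its source. -/
def Step.HeadAtSrc (s : Step V) : Prop := s.dir = EDir.bwd ∨ s.dir = EDir.bi

/-- `l` is a walk (path, possibly with repeated nodes) from `x` to `y` in `(V,E,H)`. -/
def IsWalk (E : V → V → Prop) (H : Set (Set V)) : List (Step V) → V → V → Prop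
  | [], x, y => x = y
  | s :: l, x, y => s.src = x ∧ s.Valid E H ∧ IsWalk E H l s.dst y

/-- all interior nodes of the walk are `Z`-open in the d-separation sense:
colliders are ancestors of `Z`, non-colliders are not in `Z`. -/
def DInteriorOpen (E : V → V → Prop) (Z : Set V) : List (Step V) → Prop
  | [] => True
  | [_] => True
  | s :: t :: l =>
      ((s.HeadAtDst ∧ t.HeadAtSrc) → s.dst ∈ AncSet E Z) ∧
      (¬ (s.HeadAtDst ∧ t.HeadAtSrc) → s.dst ∉ Z) ∧
      DInteriorOpen E Z (t :: l)

/-- `X` is d-separated from `Y` given `Z` in the HEDG `(V,E,H)`: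
every walk from `X` to `Y` is `Z`-blocked. -/
def DSep (E : V → V → Prop) (H : Set (Set V)) (X Y Z : Set V) : Prop :=
  ∀ x ∈ X, ∀ y ∈ Y, ∀ l : List (Step V),
    IsWalk E H l x y → ¬ (x ∉ Z ∧ y ∉ Z ∧ DInteriorOpen E Z l)

/-- all interior nodes of the walk are `Z`-σ-open: colliders are ancestors of `Z`,
and a non-collider in `Z` must not point (via a directed edge of the path) to a
node outside of its strongly connected component. -/
def SigmaInteriorOpen (E : V → V → Prop) (Z : Set V) : List (Step V) → Prop
  | [] => True
  | [_] => True
  | s :: t :: l =>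
      ((s.HeadAtDst ∧ t.HeadAtSrc) → s.dst ∈ AncSet E Z) ∧
      (¬ (s.HeadAtDst ∧ t.HeadAtSrc) →
        ¬ (s.dst ∈ Z ∧ ((¬ s.HeadAtDst ∧ ¬ InSC E s.dst s.src) ∨
                        (¬ t.HeadAtSrc ∧ ¬ InSC E s.dst t.dst)))) ∧
      SigmaInteriorOpen E Z (t :: l)

/-- `X` is σ-separated from `Y` given `Z` in the HEDG `(V,E,H)`. -/
def SigmaSep (E : V → V → Prop) (H : Set (Set V)) (X Y Z : Set V) : Prop :=
  ∀ x ∈ X, ∀ y ∈ Y, ∀ l : List (Step V),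
    IsWalk E H l x y → ¬ (x ∉ Z ∧ y ∉ Z ∧ SigmaInteriorOpen E Z l)

/-- directed edges of the marginalization of `(V,E,H)` w.r.t. (i.e. after removing) `U`:
`a → b` iff there is a directed path `a → u₁ → ⋯ → u_r → b` in `G` with all `uᵢ ∈ U`. -/
def MargE (E : V → V → Prop) (U : Set V) : V → V → Prop :=
  fun a b => a ∉ U ∧ b ∉ U ∧
    ∃ c, Relation.ReflTransGen (fun x y => E x y ∧ y ∈ U) a c ∧ E c b

/-- hyperedges of the marginalization of `(V,E,H)` w.r.t. `U`. -/
def MargH (E : V → V → Prop) (H : Set (Set V)) (U : Set V) : Set (Set V) :=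
  {F' | (∀ v ∈ F', v ∉ U) ∧ ∃ F ∈ H, F ⊆ F' ∪ U ∧
    ∀ v ∈ F', (v ∈ F ∧ v ∉ U) ∨
      ∃ u ∈ F ∩ U, ∃ c, Relation.ReflTransGen (fun x y => E x y ∧ y ∈ U) u c ∧ E c v}

/-- bidirected-edge relation induced by the hyperedges. -/
def BiRel (H : Set (Set V)) : V → V → Prop :=
  fun x y => x ≠ y ∧ ({x, y} : Set V) ∈ H

/-- (generalized) moralization of a HEDG: `v — w` iff there are `a`, `b` with
`v ∈ {a} ∪ Pa(a)`, `w ∈ {b} ∪ Pa(b)` and a bidirected chain `a ↔ ⋯ ↔ b`. -/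
def MoralE (E : V → V → Prop) (H : Set (Set V)) : V → V → Prop :=
  fun v w => v ≠ w ∧ ∃ a b, (v = a ∨ E v a) ∧ (w = b ∨ E w b) ∧
    Relation.ReflTransGen (BiRel H) a b

/-- moralization of a directed graph: undirected versions of the directed edges plus
edges between distinct parents of a common child. -/
def MoralDirE (E : V → V → Prop) : V → V → Prop :=
  fun v w => v ≠ w ∧ (E v w ∨ E w v ∨ ∃ c, E v c ∧ E w c)

/-- marginalization of an undirected graph `A` w.r.t. `W`: `a — b` iff there is a path
from `a` to `b` with all intermediate nodes in `W`. -/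
def MargUnd (A : V → V → Prop) (W : Set V) : V → V → Prop :=
  fun a b => a ∉ W ∧ b ∉ W ∧ a ≠ b ∧
    ∃ c, Relation.ReflTransGen (fun x y => A x y ∧ y ∈ W) a c ∧ A c b

/-- separation in an undirected graph: every path from `X` to `Y` contains a node of
`Z` (including the endnodes). -/
def USep (A : V → V → Prop) (X Y Z : Set V) : Prop :=
  ∀ x ∈ X, ∀ y ∈ Y,
    ¬ (x ∉ Z ∧ Relation.ReflTransGen (fun a b => A a b ∧ b ∉ Z) x y)

/-- edges of the induced sub-HEDG on `A`. -/
def InducedE (E : V → V → Prop) (A : Set V) : V → V → Prop :=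
  fun a b => a ∈ A ∧ b ∈ A ∧ E a b

/-- hyperedges of the induced sub-HEDG on `A`. -/
def InducedH (H : Set (Set V)) (A : Set V) : Set (Set V) := {F | F ∈ H ∧ F ⊆ A}

/-- `F` is an inclusion-maximal hyperedge of `H`. -/
def MaximalHyperedge (H : Set (Set V)) (F : Set V) : Prop :=
  F ∈ H ∧ ∀ F' ∈ H, F ⊆ F' → F' = F

/-- edges of the augmented directed graph of a HEDG: the original directed edges plus
`e_F → v` for every maximal hyperedge `F` and every `v ∈ F`. -/
def AugE (E : V → V → Prop) (H : Set (Set V)) :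
    V ⊕ {F : Set V // MaximalHyperedge H F} →
    V ⊕ {F : Set V // MaximalHyperedge H F} → Prop
  | .inl v, .inl w => E v w
  | .inr F, .inl v => v ∈ F.1
  | _, _ => False

/-- the trivial simplicial complex (only subsingleton hyperedges), making a directed
graph a HEDG without bidirected edges. -/
def TrivialH (W : Type*) : Set (Set W) := {F | Set.Subsingleton F}

/-- directed edges of the acyclification of a HEDG. -/
def AcyE (E : V → V → Prop) : V → V → Prop :=
  fun v w => ¬ InSC E v w ∧ ∃ w', InSC E w w' ∧ E v w'

/-- hyperedges of the acyclification of a HEDG. -/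
def AcyH (E : V → V → Prop) (H : Set (Set V)) : Set (Set V) :=
  {F' | ∃ F ∈ H, ∀ x ∈ F', ∃ v ∈ F, InSC E v x}


/-- Close off a pending bidirected chain: emit one moral-graph step (or nothing). -/
private lemma close_step {V : Type*} {E : V → V → Prop} {H : Set (Set V)} {Z : Set V}
    {v a b m : V} (hv : v = a ∨ E v a) (hm : m = b ∨ E m b)
    (hc : Relation.ReflTransGen (BiRel H) a b) (hmZ : m ∉ Z) :
    Relation.ReflTransGen (fun p q => MoralE E H p q ∧ q ∉ Z) v m := by
  by_cases hvm : v = m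
  · subst hvm; exact Relation.ReflTransGen.refl
  · exact Relation.ReflTransGen.single ⟨⟨hvm, a, b, hv, hm, hc⟩, hmZ⟩

/-- Main induction: from a `Z`-d-open walk we extract a `Z`-avoiding path in the
moralization. The invariant carries an anchor `v ∉ Z`, a node `a` with
`v = a ∨ E v a`, and a bidirected chain from `a` to the current walk node `x`;
the chain is nontrivial only when the next step has an arrowhead at its source. -/
private lemma key {V : Type*} {E : V → V → Prop} {H : Set (Set V)} {Z : Set V} {y : V}
    (hy : y ∉ Z) :
    ∀ (l : List (Step V)) (x v a : V),
      IsWalk E H l x y → DInteriorOpen E Z l → v ∉ Z →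
      (v = a ∨ E v a) → Relation.ReflTransGen (BiRel H) a x →
      ((v = x ∧ a = x) ∨ ∀ s : Step V, ∀ l' : List (Step V), l = s :: l' → Step.HeadAtSrc s) →
      Relation.ReflTransGen (fun p q => MoralE E H p q ∧ q ∉ Z) v y := by
  intro l
  induction l with
  | nil =>
    intro x v a hw _ _ hva hchain _
    have hxy : x = y := hw
    subst hxy
    exact close_step hva (Or.inl rfl) hchain hy
  | cons s l' ih =>
    intro x v a hw hop hvZ hva hchain hP
    obtain ⟨xs, d, m⟩ := s
    obtain ⟨hsrc, hval, hw'⟩ := hw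
    simp only at hsrc hval hw' ⊢
    subst hsrc
    cases d with
    | fwd =>
      -- hval : E x m ; the chain must be closed
      have hEvm : E v m := by
        rcases hP with ⟨hvx, hax⟩ | hP
        · subst hvx; exact hval
        · have := hP _ _ rfl
          rcases this with h | h <;> simp [Step.HeadAtSrc] at h
      cases l' with
      | nil =>
        have hmy : m = y := hw'
        subst hmy
        exact close_step (Or.inr hEvm) (Or.inl rfl) Relation.ReflTransGen.refl hy
      | cons t l'' =>
        obtain ⟨h1, h2, h3⟩ := hop
        by_cases hts : Step.HeadAtSrc t
        · exact ih m v m hw' h3 hvZ (Or.inr hEvm) Relation.ReflTransGen.refl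
            (Or.inr fun s₀ l₀ h₀ => by cases h₀; exact hts)
        · have hmZ : m ∉ Z := h2 (fun hcol => hts hcol.2)
          exact (close_step (Or.inr hEvm) (Or.inl rfl) Relation.ReflTransGen.refl hmZ).trans
            (ih m m m hw' h3 hmZ (Or.inl rfl) Relation.ReflTransGen.refl (Or.inl ⟨rfl, rfl⟩))
    | bwd =>
      -- hval : E m x ; close at m (m is never a collider here)
      cases l' with
      | nil =>
        have hmy : m = y := hw'
        subst hmy
        exact close_step hva (Or.inr hval) hchain hy
      | cons t l'' =>
        obtain ⟨h1, h2, h3⟩ := hop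
        have hmZ : m ∉ Z := h2 (fun hcol => by
          rcases hcol.1 with h | h <;> simp [Step.HeadAtDst] at h)
        exact (close_step hva (Or.inr hval) hchain hmZ).trans
          (ih m m m hw' h3 hmZ (Or.inl rfl) Relation.ReflTransGen.refl (Or.inl ⟨rfl, rfl⟩))
    | bi =>
      -- hval : x ≠ m ∧ {x, m} ∈ H ; extend the chain
      have hchain' : Relation.ReflTransGen (BiRel H) a m :=
        hchain.tail ⟨hval.1, hval.2⟩
      cases l' with
      | nil =>
        have hmy : m = y := hw'
        subst hmy
        exact close_step hva (Or.inl rfl) hchain' hy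
      | cons t l'' =>
        obtain ⟨h1, h2, h3⟩ := hop
        by_cases hts : Step.HeadAtSrc t
        · exact ih m v a hw' h3 hvZ hva hchain'
            (Or.inr fun s₀ l₀ h₀ => by cases h₀; exact hts)
        · have hmZ : m ∉ Z := h2 (fun hcol => hts hcol.2)
          exact (close_step hva (Or.inl rfl) hchain' hmZ).trans
            (ih m m m hw' h3 hmZ (Or.inl rfl) Relation.ReflTransGen.refl (Or.inl ⟨rfl, rfl⟩))

/-- If `X` is separated from `Y` given `Z` in the (generalized)
moralization `G^moral` of a HEDG `G`, then `X` is d-separated from `Y` given `Z` in `G`. -/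
theorem sep_moral_implies_dSep {V : Type*} [Fintype V]
    (E : V → V → Prop) (H : Set (Set V)) (hH : IsSimplicial H) (X Y Z : Set V) :
    USep (MoralE E H) X Y Z → DSep E H X Y Z := by
  intro hsep x hx y hyY l hwalk hbad
  obtain ⟨hxZ, hyZ, hop⟩ := hbad
  exact hsep x hx y hyY ⟨hxZ,
    key hyZ l x x x hwalk hop hxZ (Or.inl rfl) Relation.ReflTransGen.refl (Or.inl ⟨rfl, rfl⟩)⟩

end HedgPaper
end

section
/- For an undirected graph G=(V,E), if v ∈ W ⊆ V, then the neighbours of v outside W, i.e. ∂_G(v)∖W, form a complete subgraph in the marginalization G^{marg∖W}; moreover, if v ∉ W and ∂_G(v) is complete in G, then ∂_{G^{marg∖W}}(v) is complete in G^{marg∖W}. -/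
namespace HedgPaper

variable {V : Type*}

lemma mem_of_rtgW {V : Type*} {A : V → V → Prop} {W : Set V} {x y : V}
    (h : Relation.ReflTransGen (fun a b => A a b ∧ b ∈ W) x y) (hx : x ∈ W) : y ∈ W := by
  induction h with
  | refl => exact hx
  | tail _ hs ih => exact hs.2

lemma rev_rtgW {V : Type*} {A : V → V → Prop} (hsymm : ∀ a b, A a b → A b a)
    {W : Set V} {x y : V}
    (h : Relation.ReflTransGen (fun a b => A a b ∧ b ∈ W) x y) (hx : x ∈ W) :
    Relation.ReflTransGen (fun a b => A a b ∧ b ∈ W) y x := by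
  induction h with
  | refl => exact .refl
  | @tail b c _ hs ih =>
    exact Relation.ReflTransGen.head ⟨hsymm _ _ hs.1, mem_of_rtgW ‹_› hx⟩ ih

/-- For an undirected graph `G = (V,A)` and `W ⊆ V`:
(i) if `v ∈ W` then the neighbours of `v` outside `W` form a complete subgraph of the
marginalization `G^{marg∖W}`; (ii) if `v ∉ W` and the neighbourhood `∂_G(v)` is complete
in `G`, then `∂_{G^{marg∖W}}(v)` is complete in `G^{marg∖W}`. -/
theorem marg_complete_neighbourhoods {V : Type*} [Fintype V]
    (A : V → V → Prop) (hsymm : ∀ a b, A a b → A b a) (hirr : ∀ a, ¬ A a a)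
    (W : Set V) (v : V) :
    (v ∈ W → ∀ a b, A v a → a ∉ W → A v b → b ∉ W → a ≠ b → MargUnd A W a b) ∧
    (v ∉ W → (∀ a b, A v a → A v b → a ≠ b → A a b) →
      ∀ a b, MargUnd A W v a → MargUnd A W v b → a ≠ b → MargUnd A W a b) := by
  constructor
  · intro hvW a b hva haW hvb hbW hab
    exact ⟨haW, hbW, hab, v,
      Relation.ReflTransGen.single ⟨hsymm _ _ hva, hvW⟩, hvb⟩
  · intro hvW hcomp a b ha hb hab
    obtain ⟨-, haW, hva, c, hvc, hca⟩ := ha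
    obtain ⟨-, hbW, hvb, c', hvc', hc'b⟩ := hb
    -- a-side: either A v a, or ∃ w ∈ W, A v w ∧ reversed path from a to w
    have HA : A v a ∨ ∃ w, w ∈ W ∧ A v w ∧
        Relation.ReflTransGen (fun x y => A x y ∧ y ∈ W) a w := by
      rcases hvc.cases_head with h | ⟨w, hw, hwc⟩
      · exact Or.inl (h ▸ hca)
      · refine Or.inr ⟨w, hw.2, hw.1, ?_⟩
        exact Relation.ReflTransGen.head ⟨hsymm _ _ hca, mem_of_rtgW hwc hw.2⟩
          (rev_rtgW hsymm hwc hw.2)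
    -- b-side: either A v b, or ∃ w' ∈ W, A v w' ∧ forward path from w' ending at b
    have HB : A v b ∨ ∃ w', w' ∈ W ∧ A v w' ∧ ∃ d,
        Relation.ReflTransGen (fun x y => A x y ∧ y ∈ W) w' d ∧ A d b := by
      rcases hvc'.cases_head with h | ⟨w', hw', hwc'⟩
      · exact Or.inl (h ▸ hc'b)
      · exact Or.inr ⟨w', hw'.2, hw'.1, c', hwc', hc'b⟩
    refine ⟨haW, hbW, hab, ?_⟩
    rcases HA with hA | ⟨w, hwW, hvw, hAw⟩ <;> rcases HB with hB | ⟨w', hw'W, hvw', d, hw'd, hdb⟩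
    · exact ⟨a, .refl, hcomp a b hA hB hab⟩
    · have haw' : a ≠ w' := fun h => haW (h ▸ hw'W)
      exact ⟨d, Relation.ReflTransGen.head ⟨hcomp a w' hA hvw' haw', hw'W⟩ hw'd, hdb⟩
    · have hwb : w ≠ b := fun h => hbW (h ▸ hwW)
      exact ⟨w, hAw, hcomp w b hvw hB hwb⟩
    · by_cases hww' : w = w'
      · exact ⟨d, hAw.trans (hww' ▸ hw'd), hdb⟩
      · exact ⟨d, (hAw.tail ⟨hcomp w w' hvw hvw' hww', hw'W⟩).trans hw'd, hdb⟩

end HedgPaper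
end

section
/- Separation in an undirected graph is stable under marginalization: for an undirected graph G=(V,E) and X,Y,Z,W ⊆ V with W ∩ (X∪Y∪Z) = ∅, X ⟂_G Y | Z holds iff X ⟂_{G^{marg∖W}} Y | Z holds. -/
namespace HedgPaper

variable {V : Type*}

/-- Separation in an undirected graph is stable under marginalization:
for `W ∩ (X ∪ Y ∪ Z) = ∅`, `X ⟂_G Y | Z` iff `X ⟂_{G^{marg∖W}} Y | Z`. -/
theorem uSep_marginalization {V : Type*} [Fintype V]
    (A : V → V → Prop) (hsymm : ∀ a b, A a b → A b a) (hirr : ∀ a, ¬ A a a)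
    (X Y Z W : Set V) (hW : W ∩ (X ∪ Y ∪ Z) = ∅) :
    USep A X Y Z ↔ USep (MargUnd A W) X Y Z := by
  have hWZ : ∀ w ∈ W, w ∉ Z := by
    intro w hw hz
    have : w ∈ W ∩ (X ∪ Y ∪ Z) := ⟨hw, Or.inr hz⟩
    simp [hW] at this
  have hWX : ∀ x ∈ X, x ∉ W := by
    intro x hx hw
    have : x ∈ W ∩ (X ∪ Y ∪ Z) := ⟨hw, Or.inl (Or.inl hx)⟩
    simp [hW] at this
  have hWY : ∀ y ∈ Y, y ∉ W := by
    intro y hy hw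
    have : y ∈ W ∩ (X ∪ Y ∪ Z) := ⟨hw, Or.inl (Or.inr hy)⟩
    simp [hW] at this
  constructor
  · -- expand a marginal path into a path in A
    intro h x hx y hy hbad
    obtain ⟨hxZ, hpath⟩ := hbad
    refine h x hx y hy ⟨hxZ, ?_⟩
    clear hy hx
    induction hpath with
    | refl => exact .refl
    | tail hp hstep ih =>
        obtain ⟨⟨_, _, _, c, hQ, hcb⟩, hbZ⟩ := hstep
        have hseg : Relation.ReflTransGen (fun a b => A a b ∧ b ∉ Z) _ c :=
          Relation.ReflTransGen.mono (r := fun x y => A x y ∧ y ∈ W) (p := fun a b => A a b ∧ b ∉ Z) (fun a b hab => ⟨hab.1, hWZ b hab.2⟩) _ _ hQ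
        exact (ih.trans hseg).tail ⟨hcb, hbZ⟩
  · -- compress a path in A into a marginal path
    intro h x hx y hy hbad
    obtain ⟨hxZ, hpath⟩ := hbad
    refine h x hx y hy ⟨hxZ, ?_⟩
    have hyW : y ∉ W := hWY y hy
    have key : ∀ a, Relation.ReflTransGen (fun a b => A a b ∧ b ∉ Z) a y →
        ∀ s, s ∉ W →
        (a = s ∨ (a ∈ W ∧ Relation.ReflTransGen (fun u v => A u v ∧ v ∈ W) s a)) →
        Relation.ReflTransGen (fun a b => MargUnd A W a b ∧ b ∉ Z) s y := by
      intro a hp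
      induction hp using Relation.ReflTransGen.head_induction_on with
      | refl =>
          intro s hsW hcase
          rcases hcase with rfl | ⟨hyW', _⟩
          · exact .refl
          · exact absurd hyW' hyW
      | @head a b hab hby ih =>
          intro s hsW hcase
          by_cases hbW : b ∈ W
          · refine ih s hsW (Or.inr ⟨hbW, ?_⟩)
            rcases hcase with rfl | ⟨haW, hQ⟩
            · exact Relation.ReflTransGen.single ⟨hab.1, hbW⟩
            · exact hQ.tail ⟨hab.1, hbW⟩
          · by_cases hbs : b = s
            · exact ih s hsW (Or.inl hbs)
            · have hQsa : Relation.ReflTransGen (fun u v => A u v ∧ v ∈ W) s a := by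
                rcases hcase with rfl | ⟨haW, hQ⟩
                · exact .refl
                · exact hQ
              have hedge : MargUnd A W s b :=
                ⟨hsW, hbW, fun hsb => hbs hsb.symm, a, hQsa, hab.1⟩
              exact Relation.ReflTransGen.head ⟨hedge, hab.2⟩ (ih _ hbW (Or.inl rfl))
    exact key x hpath x (hWX x hx) (Or.inl rfl)

end HedgPaper
end

section
/- For a HEDG G and subset W ⊆ V, the moralization of the marginalization (G^{marg∖W})^moral is a subgraph of the marginalization of the moralization (G^moral)^{marg∖W}, with the same node set V∖W. -/
namespace HedgPaper

variable {V : Type*}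

section Aux

variable {E : V → V → Prop} {H : Set (Set V)} {W : Set V} {v : V}

/-- path in the moral graph all of whose nodes after the start lie in `W`. -/
private def Tt (E : V → V → Prop) (H : Set (Set V)) (W : Set V) : V → V → Prop :=
  Relation.ReflTransGen (fun x y => MoralE E H x y ∧ y ∈ W)

/-- a path through `W` from `x` to `y` (last edge arbitrary moral edge). -/
private def Pp (E : V → V → Prop) (H : Set (Set V)) (W : Set V) (x y : V) : Prop :=
  ∃ m, Tt E H W x m ∧ MoralE E H m y

private def Jj (E : V → V → Prop) (H : Set (Set V)) (W : Set V) (x y : V) : Prop :=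
  x = y ∨ Pp E H W x y

private def JW (E : V → V → Prop) (H : Set (Set V)) (W : Set V) (v c : V) : Prop :=
  (c = v ∨ c ∈ W) ∧ Jj E H W v c

private def Entry (E : V → V → Prop) (H : Set (Set V)) (W : Set V) (v p : V) : Prop :=
  JW E H W v p ∨ ∃ c, JW E H W v c ∧ E c p

/-- invariant: `x` is the end of a bidirected chain in `H` whose start is suitably
anchored to `v` by a path through `W`. -/
private def Inv (E : V → V → Prop) (H : Set (Set V)) (W : Set V) (v x : V) : Prop :=
  ∃ p, Entry E H W v p ∧ Relation.ReflTransGen (BiRel H) p x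

/-- attachment of a node to a hyperedge, as in the definition of `MargH`. -/
private def Att (E : V → V → Prop) (H : Set (Set V)) (W : Set V) (F : Set V) (x : V) :
    Prop :=
  x ∈ F ∨ ∃ u, u ∈ F ∧ u ∈ W ∧ ∃ c, c ∈ W ∧ Tt E H W u c ∧ E c x

private lemma biRel_symm : Symmetric (BiRel H) := fun _ _ h =>
  ⟨h.1.symm, by have := h.2; rwa [Set.pair_comm]⟩

private lemma moralE_symm {x y : V} (h : MoralE E H x y) : MoralE E H y x := by
  obtain ⟨hne, a, b, ha, hb, hch⟩ := h
  exact ⟨hne.symm, b, a, hb, ha, (@Std.Symm.symm _ _ (@Relation.ReflTransGen.stdSymm _ _ ⟨fun _ _ h => biRel_symm h⟩) _ _ hch)⟩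

private lemma pp_symm {x y : V} (h : Pp E H W x y) : Pp E H W y x := by
  obtain ⟨m, hT, hM⟩ := h
  induction hT using Relation.ReflTransGen.head_induction_on with
  | refl => exact ⟨y, Relation.ReflTransGen.refl, moralE_symm hM⟩
  | head hstep _ ih =>
      obtain ⟨m', hT', hM'⟩ := ih
      exact ⟨_, hT'.tail ⟨hM', hstep.2⟩, moralE_symm hstep.1⟩

private lemma jj_symm {x y : V} (h : Jj E H W x y) : Jj E H W y x :=
  h.imp Eq.symm pp_symm

private lemma jj_comp {x y z : V} (h1 : Jj E H W x y) (hyW : y ∈ W)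
    (h2 : Jj E H W y z) : Jj E H W x z := by
  rcases h1 with rfl | ⟨m, hT, hM⟩
  · exact h2
  rcases h2 with rfl | ⟨m', hT', hM'⟩
  · exact Or.inr ⟨m, hT, hM⟩
  · exact Or.inr ⟨m', (hT.tail ⟨hM, hyW⟩).trans hT', hM'⟩

private lemma jj_of_tt {x y : V} (h : Tt E H W x y) : Jj E H W x y := by
  rcases Relation.ReflTransGen.cases_tail h with h' | ⟨c, hT, hR⟩
  · exact Or.inl h'.symm
  · exact Or.inr ⟨c, hT, hR.1⟩

private lemma dirT {u c : V} (h : Relation.ReflTransGen (fun x y => E x y ∧ y ∈ W) u c) :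
    Tt E H W u c := by
  induction h with
  | refl => exact Relation.ReflTransGen.refl
  | @tail b c _ hstep ih =>
      by_cases hbc : b = c
      · rwa [hbc] at ih
      · exact ih.tail
          ⟨⟨hbc, c, c, Or.inr hstep.1, Or.inl rfl, Relation.ReflTransGen.refl⟩, hstep.2⟩

private lemma endW {u c : V}
    (h : Relation.ReflTransGen (fun x y => E x y ∧ y ∈ W) u c) : c = u ∨ c ∈ W := by
  rcases Relation.ReflTransGen.cases_tail h with h' | ⟨d, _, hR⟩
  · exact Or.inl h'
  · exact Or.inr hR.2

private lemma exitInv {q : V} (h : Inv E H W v q) : Jj E H W v q := by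
  obtain ⟨p, hp, hch⟩ := h
  rcases hp with ⟨hpw, hjp⟩ | ⟨c, ⟨hcw, hjc⟩, hEcp⟩
  · by_cases hpq : p = q
    · subst hpq; exact hjp
    · have hm : MoralE E H p q := ⟨hpq, p, q, Or.inl rfl, Or.inl rfl, hch⟩
      have hjpq : Jj E H W p q := Or.inr ⟨p, Relation.ReflTransGen.refl, hm⟩
      rcases hpw with rfl | hpW
      · exact hjpq
      · exact jj_comp hjp hpW hjpq
  · by_cases hcq : c = q
    · subst hcq; exact hjc
    · have hm : MoralE E H c q := ⟨hcq, p, q, Or.inr hEcp, Or.inl rfl, hch⟩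
      have hjcq : Jj E H W c q := Or.inr ⟨c, Relation.ReflTransGen.refl, hm⟩
      rcases hcw with rfl | hcW
      · exact hjcq
      · exact jj_comp hjc hcW hjcq

private lemma exitParent {x c' : V} (h : Inv E H W v x) (hE : E c' x) :
    Jj E H W v c' := by
  obtain ⟨p, hp, hch⟩ := h
  rcases hp with ⟨hpw, hjp⟩ | ⟨c, ⟨hcw, hjc⟩, hEcp⟩
  · by_cases hpq : p = c'
    · subst hpq; exact hjp
    · have hm : MoralE E H p c' := ⟨hpq, p, x, Or.inl rfl, Or.inr hE, hch⟩
      have hj2 : Jj E H W p c' := Or.inr ⟨p, Relation.ReflTransGen.refl, hm⟩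
      rcases hpw with rfl | hpW
      · exact hj2
      · exact jj_comp hjp hpW hj2
  · by_cases hcc : c = c'
    · subst hcc; exact hjc
    · have hm : MoralE E H c c' := ⟨hcc, p, x, Or.inr hEcp, Or.inr hE, hch⟩
      have hj2 : Jj E H W c c' := Or.inr ⟨c, Relation.ReflTransGen.refl, hm⟩
      rcases hcw with rfl | hcW
      · exact hj2
      · exact jj_comp hjc hcW hj2

private lemma pairH (hH : IsSimplicial H) {F : Set V} (hF : F ∈ H) {x u : V}
    (hx : x ∈ F) (hu : u ∈ F) : ({x, u} : Set V) ∈ H :=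
  hH.2 F hF _ (Set.insert_subset_iff.mpr ⟨hx, Set.singleton_subset_iff.mpr hu⟩)

private lemma attToQ {F : Set V} {x : V} (hinv : Inv E H W v x)
    (hatt : Att E H W F x) : ∃ q, q ∈ F ∧ Inv E H W v q := by
  rcases hatt with hxF | ⟨u, huF, huW, c, hcW, hT, hE⟩
  · exact ⟨x, hxF, hinv⟩
  · have hjc : Jj E H W v c := exitParent hinv hE
    have hju : Jj E H W v u := jj_comp hjc hcW (jj_symm (jj_of_tt hT))
    exact ⟨u, huF, u, Or.inl ⟨Or.inr huW, hju⟩, Relation.ReflTransGen.refl⟩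

private lemma crossInv (hH : IsSimplicial H) {F : Set V} (hF : F ∈ H) {q x' : V}
    (hqF : q ∈ F) (hinv : Inv E H W v q) (hatt : Att E H W F x') : Inv E H W v x' := by
  rcases hatt with hxF | ⟨u, huF, huW, c, hcW, hT, hE⟩
  · by_cases hqx : q = x'
    · rwa [hqx] at hinv
    · obtain ⟨p, hp, hch⟩ := hinv
      exact ⟨p, hp, hch.tail ⟨hqx, pairH hH hF hqF hxF⟩⟩
  · have hinvu : Inv E H W v u := by
      by_cases hqu : q = u
      · rwa [hqu] at hinv
      · obtain ⟨p, hp, hch⟩ := hinv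
        exact ⟨p, hp, hch.tail ⟨hqu, pairH hH hF hqF huF⟩⟩
    have hju : Jj E H W v u := exitInv hinvu
    have hjc : Jj E H W v c := jj_comp hju huW (jj_of_tt hT)
    exact ⟨x', Or.inr ⟨c, ⟨Or.inr hcW, hjc⟩, hE⟩, Relation.ReflTransGen.refl⟩

private lemma att_of_margH {a b : V} (h : ({a, b} : Set V) ∈ MargH E H W) :
    ∃ F ∈ H, Att E H W F a ∧ Att E H W F b := by
  obtain ⟨hnW, F, hF, _, hlink⟩ := h
  have key : ∀ x ∈ ({a, b} : Set V), Att E H W F x := by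
    intro x hx
    rcases hlink x hx with ⟨h1, _⟩ | ⟨u, hu, c, hrt, hE⟩
    · exact Or.inl h1
    · refine Or.inr ⟨u, hu.1, hu.2, c, ?_, dirT hrt, hE⟩
      rcases endW hrt with h' | h'
      · rw [h']; exact hu.2
      · exact h'
  exact ⟨F, hF, key a (by simp), key b (by simp)⟩

private lemma chainInv (hH : IsSimplicial H) {a b : V}
    (hch : Relation.ReflTransGen (BiRel (MargH E H W)) a b)
    (hbase : Inv E H W v a) : Inv E H W v b := by
  induction hch with
  | refl => exact hbase
  | tail _ hstep ih =>
      obtain ⟨hne', hmem⟩ := hstep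
      obtain ⟨F, hF, hatt1, hatt2⟩ := att_of_margH hmem
      obtain ⟨q, hqF, hq⟩ := attToQ ih hatt1
      exact crossInv hH hF hqF hq hatt2

end Aux

/-- For a HEDG `G` and `W ⊆ V`, the moralization of the
marginalization `(G^{marg∖W})^moral` is an undirected subgraph of the marginalization of
the moralization `(G^moral)^{marg∖W}` (both with node set `V∖W`). -/
theorem moral_marg_subgraph_of_marg_moral {V : Type*} [Fintype V]
    (E : V → V → Prop) (H : Set (Set V)) (hH : IsSimplicial H) (W : Set V) :
    ∀ v w : V, MoralE (MargE E W) (MargH E H W) v w → MargUnd (MoralE E H) W v w := by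
  intro v w hvw
  obtain ⟨hne, a, b, hva, hwb, hch⟩ := hvw
  -- endpoints are outside W
  have hvW : v ∉ W := by
    rcases hva with hva' | h
    · rcases Relation.ReflTransGen.cases_head hch with hab | ⟨c, hstep, _⟩
      · rcases hwb with hwb' | h
        · exact absurd (hva'.trans (hab.trans hwb'.symm)) hne
        · rw [hva', hab]; exact h.2.1
      · rw [hva']; exact hstep.2.1 a (by simp)
    · exact h.1
  have hwW : w ∉ W := by
    rcases hwb with hwb' | h
    · rcases Relation.ReflTransGen.cases_tail hch with hab | ⟨c, _, hstep⟩
      · rcases hva with hva' | h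
        · exact absurd (hva'.trans (hab.symm.trans hwb'.symm)) hne
        · rw [hwb', hab]; exact h.2.1
      · rw [hwb']; exact hstep.2.1 b (by simp)
    · exact h.1
  -- base of the invariant at `a`
  have hbase : Inv E H W v a := by
    rcases hva with rfl | ⟨_, _, c, hrt, hE⟩
    · exact ⟨v, Or.inl ⟨Or.inl rfl, Or.inl rfl⟩, Relation.ReflTransGen.refl⟩
    · exact ⟨a, Or.inr ⟨c, ⟨endW hrt, jj_of_tt (dirT hrt)⟩, hE⟩,
        Relation.ReflTransGen.refl⟩
  have hinvb : Inv E H W v b := chainInv hH hch hbase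
  refine ⟨hvW, hwW, hne, ?_⟩
  rcases hwb with rfl | ⟨_, _, c, hrt, hE⟩
  · rcases exitInv hinvb with h | ⟨m, hT, hM⟩
    · exact absurd h hne
    · exact ⟨m, hT, hM⟩
  · have hjc : Jj E H W v c := exitParent hinvb hE
    have hjw : Jj E H W v w := by
      rcases endW hrt with rfl | hcW
      · exact hjc
      · exact jj_comp hjc hcW (jj_symm (jj_of_tt (dirT hrt)))
    rcases hjw with h | ⟨m, hT, hM⟩
    · exact absurd h hne
    · exact ⟨m, hT, hM⟩

end HedgPaper
end

section
/- σ-separation implies d-separation in a HEDG: for any HEDG G=(V,E,H) and subsets X,Y,Z ⊆ V, if X is σ-separated from Y given Z then X is d-separated from Y given Z. -/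
namespace HedgPaper

variable {V : Type*}

lemma dOpen_sigmaOpen (E : V → V → Prop) (Z : Set V) :
    ∀ l : List (Step V), DInteriorOpen E Z l → SigmaInteriorOpen E Z l := by
  intro l
  induction l with
  | nil => intro h; trivial
  | cons s l ih =>
    cases l with
    | nil => intro h; trivial
    | cons t l' =>
      rintro ⟨h1, h2, h3⟩
      exact ⟨h1, fun hnc hmem => (h2 hnc) hmem.1, ih h3⟩

/-- σ-separation implies d-separation in a HEDG: if `X` is σ-separated
from `Y` given `Z` then `X` is d-separated from `Y` given `Z`. -/
theorem sigmaSep_implies_dSep {V : Type*} [Fintype V]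
    (E : V → V → Prop) (H : Set (Set V)) (hH : IsSimplicial H) (X Y Z : Set V) :
    SigmaSep E H X Y Z → DSep E H X Y Z := by
  intro hs x hx y hy l hw ⟨hxZ, hyZ, hd⟩
  exact hs x hx y hy l hw ⟨hxZ, hyZ, dOpen_sigmaOpen E Z l hd⟩

end HedgPaper
end

section
/- σ-separation in a HEDG G is equivalent to d-separation in its acyclification G^acy: for all subsets X,Y,Z ⊆ V, X ⟂_G^σ Y | Z if and only if X ⟂_{G^acy}^d Y | Z. -/
namespace HedgPaper

variable {V : Type*}

/-! ### Auxiliary machinery for Statement 14 -/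

section Stmt14

variable {E : V → V → Prop} {H : Set (Set V)} {Z : Set V}

lemma inSC_refl (v : V) : InSC E v v := ⟨.refl, .refl⟩

lemma InSC.symm' {v w : V} (h : InSC E v w) : InSC E w v := ⟨h.2, h.1⟩

lemma InSC.trans' {u v w : V} (h : InSC E u v) (h' : InSC E v w) : InSC E u w :=
  ⟨h.1.trans h'.1, h'.2.trans h.2⟩

lemma reach_of_acyE {v w : V} (h : AcyE E v w) : Reach E v w := by
  obtain ⟨-, w', hsc, he⟩ := h
  exact Relation.ReflTransGen.head he hsc.2

lemma reach_of_reachAcy {v w : V} (h : Relation.ReflTransGen (AcyE E) v w) :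
    Reach E v w := by
  induction h with
  | refl => exact .refl
  | tail _ h2 ih => exact ih.trans (reach_of_acyE h2)

lemma ancAcy_subset : AncSet (AcyE E) Z ⊆ AncSet E Z := by
  rintro v ⟨z, hz, hr⟩; exact ⟨z, hz, reach_of_reachAcy hr⟩

lemma anc_to_acy {v : V} (h : v ∈ AncSet E Z) :
    ∃ s, InSC E v s ∧ s ∈ AncSet (AcyE E) Z := by
  obtain ⟨z, hz, hr⟩ := h
  induction hr using Relation.ReflTransGen.head_induction_on with
  | refl => exact ⟨z, inSC_refl z, z, hz, .refl⟩
  | head hac hcz ih =>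
    rename_i a c
    obtain ⟨s, hcs, hs⟩ := ih
    by_cases hsc : InSC E a c
    · exact ⟨s, hsc.trans' hcs, hs⟩
    · refine ⟨a, inSC_refl a, ?_⟩
      obtain ⟨z', hz', hr'⟩ := hs
      refine ⟨z', hz', Relation.ReflTransGen.head ⟨?_, c, hcs.symm', hac⟩ hr'⟩
      exact fun h' => hsc (h'.trans' hcs.symm')

lemma pairSC_mem_acyH (hH : IsSimplicial H) {u r : V} (h : InSC E u r) :
    ({u, r} : Set V) ∈ AcyH E H := by
  refine ⟨{u}, hH.1 u, ?_⟩
  rintro x (rfl | rfl)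
  · exact ⟨x, rfl, inSC_refl x⟩
  · exact ⟨u, rfl, h⟩

lemma pair_mem_acyH (hH : IsSimplicial H) {a b a' b' : V}
    (hm : ({a, b} : Set V) ∈ H) (ha : InSC E a a') (hb : InSC E b b') :
    ({a', b'} : Set V) ∈ AcyH E H := by
  refine ⟨{a, b}, hm, ?_⟩
  rintro x (rfl | rfl)
  · exact ⟨a, Or.inl rfl, ha⟩
  · exact ⟨b, Or.inr rfl, hb⟩

lemma acyH_pair_elim (hH : IsSimplicial H) {v w : V}
    (h : ({v, w} : Set V) ∈ AcyH E H) :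
    ∃ p q, InSC E p v ∧ InSC E q w ∧ (p = q ∨ (p ≠ q ∧ ({p, q} : Set V) ∈ H)) := by
  obtain ⟨F, hF, hall⟩ := h
  obtain ⟨p, hp, hpv⟩ := hall v (Or.inl rfl)
  obtain ⟨q, hq, hqw⟩ := hall w (Or.inr rfl)
  refine ⟨p, q, hpv, hqw, ?_⟩
  by_cases hpq : p = q
  · exact Or.inl hpq
  · refine Or.inr ⟨hpq, hH.2 F hF {p, q} ?_⟩
    rintro x (rfl | rfl) <;> assumption

/-! walks -/

lemma isWalk_append {l1 l2 : List (Step V)} {x m y : V}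
    (h1 : IsWalk E H l1 x m) (h2 : IsWalk E H l2 m y) :
    IsWalk E H (l1 ++ l2) x y := by
  induction l1 generalizing x with
  | nil => exact (h1 : x = m) ▸ h2
  | cons s l ih => exact ⟨h1.1, h1.2.1, ih h1.2.2⟩

lemma isWalk_split {l1 l2 : List (Step V)} {x y : V}
    (h : IsWalk E H (l1 ++ l2) x y) :
    ∃ m, IsWalk E H l1 x m ∧ IsWalk E H l2 m y := by
  induction l1 generalizing x with
  | nil => exact ⟨x, rfl, h⟩
  | cons s l ih =>
    obtain ⟨m, h1, h2⟩ := ih h.2.2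
    exact ⟨m, ⟨h.1, h.2.1, h1⟩, h2⟩

lemma isWalk_head_src {l : List (Step V)} {x y : V} {f : Step V}
    (h : IsWalk E H l x y) (hf : l.head? = some f) : f.src = x := by
  cases l with
  | nil => simp at hf
  | cons s t =>
    obtain rfl : s = f := by simpa using hf
    exact h.1

lemma isWalk_getLast_dst {l : List (Step V)} {x y : V} {g : Step V}
    (h : IsWalk E H l x y) (hg : l.getLast? = some g) : g.dst = y := by
  induction l generalizing x with
  | nil => simp at hg
  | cons s t ih =>
    cases t with
    | nil =>
      obtain rfl : s = g := by simpa using hg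
      exact h.2.2
    | cons a t' =>
      rw [List.getLast?_cons_cons] at hg
      exact ih h.2.2 hg

lemma getLast?_mem' {α : Type*} {l : List α} {a : α} (h : l.getLast? = some a) :
    a ∈ l := by
  induction l with
  | nil => simp at h
  | cons b t ih =>
    cases t with
    | nil =>
      obtain rfl : b = a := by simpa using h
      exact List.mem_singleton_self _
    | cons c t' =>
      rw [List.getLast?_cons_cons] at h
      exact List.mem_cons_of_mem _ (ih h)

lemma head?_mem' {α : Type*} {l : List α} {a : α} (h : l.head? = some a) : a ∈ l := by
  cases l with
  | nil => simp at h
  | cons b t =>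
    obtain rfl : b = a := by simpa using h
    exact List.mem_cons_self

/-! junction-based openness -/

/-- junction condition of σ-openness. -/
def Jsig (E : V → V → Prop) (Z : Set V) (s t : Step V) : Prop :=
  ((s.HeadAtDst ∧ t.HeadAtSrc) → s.dst ∈ AncSet E Z) ∧
  (¬ (s.HeadAtDst ∧ t.HeadAtSrc) →
      ¬ (s.dst ∈ Z ∧ ((¬ s.HeadAtDst ∧ ¬ InSC E s.dst s.src) ∨
                      (¬ t.HeadAtSrc ∧ ¬ InSC E s.dst t.dst))))

/-- junction condition of d-openness. -/
def Jd (E : V → V → Prop) (Z : Set V) (s t : Step V) : Prop :=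
  ((s.HeadAtDst ∧ t.HeadAtSrc) → s.dst ∈ AncSet E Z) ∧
  (¬ (s.HeadAtDst ∧ t.HeadAtSrc) → s.dst ∉ Z)

/-- openness as a chain of junction conditions. -/
def JOpen (J : Step V → Step V → Prop) : List (Step V) → Prop
  | [] => True
  | [_] => True
  | s :: t :: l => J s t ∧ JOpen J (t :: l)

lemma jOpen_tail {J : Step V → Step V → Prop} {s : Step V} {l : List (Step V)}
    (h : JOpen J (s :: l)) : JOpen J l := by
  cases l with
  | nil => trivial
  | cons t l' => exact h.2

lemma jOpen_cons_head {J : Step V → Step V → Prop} {s t : Step V} {l : List (Step V)}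
    (h : JOpen J (s :: l)) (ht : l.head? = some t) : J s t := by
  cases l with
  | nil => simp at ht
  | cons a l' =>
    obtain rfl : a = t := by simpa using ht
    exact h.1

lemma jOpen_append {J : Step V → Step V → Prop} {l1 l2 : List (Step V)}
    (h1 : JOpen J l1) (h2 : JOpen J l2)
    (hj : ∀ g f, l1.getLast? = some g → l2.head? = some f → J g f) :
    JOpen J (l1 ++ l2) := by
  induction l1 with
  | nil => exact h2
  | cons s l ih =>
    cases l with
    | nil =>
      cases l2 with
      | nil => trivial
      | cons f l2' => exact ⟨hj s f rfl rfl, h2⟩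
    | cons t l' =>
      refine ⟨h1.1, ih h1.2 ?_⟩
      intro g f hg hf
      exact hj g f (by rw [List.getLast?_cons_cons]; exact hg) hf

lemma jOpen_split {J : Step V → Step V → Prop} {l1 l2 : List (Step V)}
    (h : JOpen J (l1 ++ l2)) :
    JOpen J l1 ∧ JOpen J l2 ∧
      (∀ g f, l1.getLast? = some g → l2.head? = some f → J g f) := by
  induction l1 with
  | nil => exact ⟨trivial, h, by simp⟩
  | cons s l ih =>
    cases l with
    | nil =>
      cases l2 with
      | nil => exact ⟨trivial, trivial, by simp⟩
      | cons f l2' =>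
        refine ⟨trivial, h.2, ?_⟩
        intro g f' hg hf'
        obtain rfl : s = g := by simpa using hg
        obtain rfl : f = f' := by simpa using hf'
        exact h.1
    | cons t l' =>
      obtain ⟨ha, hb, hc⟩ := ih h.2
      refine ⟨⟨h.1, ha⟩, hb, ?_⟩
      intro g f hg hf
      exact hc g f (by rw [List.getLast?_cons_cons] at hg; exact hg) hf

lemma sigmaOpen_iff {l : List (Step V)} :
    SigmaInteriorOpen E Z l ↔ JOpen (Jsig E Z) l := by
  induction l with
  | nil => exact Iff.rfl
  | cons s l ih =>
    cases l with
    | nil => exact Iff.rfl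
    | cons t l' =>
      constructor
      · rintro ⟨h1, h2, h3⟩
        exact ⟨⟨h1, h2⟩, ih.mp h3⟩
      · rintro ⟨⟨h1, h2⟩, h3⟩
        exact ⟨h1, h2, ih.mpr h3⟩

lemma dOpen_iff {E' : V → V → Prop} {l : List (Step V)} :
    DInteriorOpen E' Z l ↔ JOpen (Jd E' Z) l := by
  induction l with
  | nil => exact Iff.rfl
  | cons s l ih =>
    cases l with
    | nil => exact Iff.rfl
    | cons t l' =>
      constructor
      · rintro ⟨h1, h2, h3⟩
        exact ⟨⟨h1, h2⟩, ih.mp h3⟩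
      · rintro ⟨⟨h1, h2⟩, h3⟩
        exact ⟨h1, h2, ih.mpr h3⟩

lemma jsig_of {s t : Step V}
    (hc : s.HeadAtDst ∧ t.HeadAtSrc → s.dst ∈ AncSet E Z)
    (hl : s.HeadAtDst ∨ InSC E s.dst s.src)
    (hr : t.HeadAtSrc ∨ InSC E s.dst t.dst) : Jsig E Z s t := by
  refine ⟨hc, fun _ h => ?_⟩
  rcases h.2 with ⟨h1, h2⟩ | ⟨h1, h2⟩
  · exact h2 (hl.resolve_left h1)
  · exact h2 (hr.resolve_left h1)


/-! directed chains inside a strongly connected component -/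

lemma fwdChain {a b : V} (hab : Reach E a b) :
    Reach E b a →
    ∃ l, IsWalk E H l a b ∧
      ∀ st ∈ l, st.dir = EDir.fwd ∧ InSC E a st.src ∧ InSC E a st.dst := by
  induction hab using Relation.ReflTransGen.head_induction_on with
  | refl => exact fun _ => ⟨[], rfl, by simp⟩
  | head h' h ih =>
    rename_i x c
    intro hbx
    have hxc : InSC E x c := ⟨Relation.ReflTransGen.single h', h.trans hbx⟩
    obtain ⟨l, hw, hp⟩ := ih (hbx.tail h')
    refine ⟨⟨x, .fwd, c⟩ :: l, ⟨rfl, h', hw⟩, ?_⟩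
    intro st hst
    rcases List.mem_cons.mp hst with rfl | hst
    · exact ⟨rfl, inSC_refl x, hxc⟩
    · obtain ⟨h1, h2, h3⟩ := hp st hst
      exact ⟨h1, hxc.trans' h2, hxc.trans' h3⟩

lemma bwdChain {a b : V} (h : Reach E b a) :
    Reach E a b →
    ∃ l, IsWalk E H l a b ∧
      ∀ st ∈ l, st.dir = EDir.bwd ∧ InSC E a st.src ∧ InSC E a st.dst := by
  induction h with
  | refl => exact fun _ => ⟨[], rfl, by simp⟩
  | tail h' e ih =>
    rename_i m c
    intro hab
    obtain ⟨l, hw, hp⟩ := ih (Relation.ReflTransGen.head e hab)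
    have hcm : InSC E c m := ⟨hab.trans h', Relation.ReflTransGen.single e⟩
    refine ⟨⟨c, .bwd, m⟩ :: l, ⟨rfl, e, hw⟩, ?_⟩
    intro st hst
    rcases List.mem_cons.mp hst with rfl | hst
    · exact ⟨rfl, inSC_refl c, hcm⟩
    · obtain ⟨h1, h2, h3⟩ := hp st hst
      exact ⟨h1, hcm.trans' h2, hcm.trans' h3⟩

lemma jOpen_of_adj {J : Step V → Step V → Prop} {P : Step V → Prop}
    (hP : ∀ s t, P s → P t → J s t) :
    ∀ {l : List (Step V)}, (∀ st ∈ l, P st) → JOpen J l := by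
  intro l
  induction l with
  | nil => exact fun _ => trivial
  | cons s l ih =>
    intro h
    cases l with
    | nil => trivial
    | cons t l' =>
      refine ⟨hP s t (h s (by simp)) (h t (by simp)), ih ?_⟩
      intro st hst
      exact h st (List.mem_cons_of_mem _ hst)

lemma jOpen_fwd_base {a : V} {l : List (Step V)}
    (h : ∀ st ∈ l, st.dir = EDir.fwd ∧ InSC E a st.src ∧ InSC E a st.dst) :
    JOpen (Jsig E Z) l := by
  refine jOpen_of_adj ?_ h
  rintro s t ⟨hs, _, hsd⟩ ⟨ht, _, htd⟩
  refine jsig_of ?_ (Or.inl (Or.inl hs)) (Or.inr (hsd.symm'.trans' htd))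
  rintro ⟨_, hts⟩
  rcases hts with h' | h' <;> rw [ht] at h' <;> exact absurd h' (by simp)

lemma jOpen_bwd_base {a : V} {l : List (Step V)}
    (h : ∀ st ∈ l, st.dir = EDir.bwd ∧ InSC E a st.src ∧ InSC E a st.dst) :
    JOpen (Jsig E Z) l := by
  refine jOpen_of_adj ?_ h
  rintro s t ⟨hs, hss, hsd⟩ ⟨ht, _, _⟩
  refine jsig_of ?_ (Or.inr (hsd.symm'.trans' hss)) (Or.inl (Or.inl ht))
  rintro ⟨hsh, _⟩
  rcases hsh with h' | h' <;> rw [hs] at h' <;> exact absurd h' (by simp)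

/-- replacement of a single acyclification step by a σ-open walk in `G`. -/
lemma repl_step (hH : IsSimplicial H) (s : Step V)
    (hv : s.Valid (AcyE E) (AcyH E H)) :
    ∃ l, l ≠ [] ∧ IsWalk E H l s.src s.dst ∧ JOpen (Jsig E Z) l ∧
      ∀ st ∈ l,
        (st.HeadAtSrc → s.HeadAtSrc) ∧
        (¬ st.HeadAtSrc → (InSC E st.src st.dst ∨ ¬ s.HeadAtSrc)) ∧
        (st.HeadAtDst → s.HeadAtDst) ∧
        (¬ st.HeadAtDst → (InSC E st.src st.dst ∨ ¬ s.HeadAtDst)) := by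
  obtain ⟨x, d, y⟩ := s
  cases d with
  | fwd =>
    obtain ⟨hnsc, w', hsc, he⟩ := (hv : AcyE E x y)
    obtain ⟨l, hw, hp⟩ := fwdChain (H := H) hsc.2 hsc.1
    have hall : ∀ st ∈ (⟨x, .fwd, w'⟩ : Step V) :: l, st.dir = EDir.fwd := by
      intro st hst
      rcases List.mem_cons.mp hst with rfl | hst
      · rfl
      · exact (hp st hst).1
    refine ⟨⟨x, .fwd, w'⟩ :: l, by simp, ⟨rfl, he, hw⟩, ?_, ?_⟩
    · refine jOpen_append (l1 := [⟨x, .fwd, w'⟩]) trivial (jOpen_fwd_base hp) ?_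
      intro g f hg hf
      obtain rfl : (⟨x, .fwd, w'⟩ : Step V) = g := by simpa using hg
      have hfm := hp f (head?_mem' hf)
      refine jsig_of ?_ (Or.inl (Or.inl rfl)) (Or.inr hfm.2.2)
      rintro ⟨_, hfs⟩
      rcases hfs with h' | h' <;> rw [hfm.1] at h' <;> exact absurd h' (by simp)
    · intro st hst
      have hd := hall st hst
      refine ⟨?_, ?_, ?_, ?_⟩
      · intro h'; exact absurd h' (by simp [Step.HeadAtSrc, hd])
      · intro _; exact Or.inr (by simp [Step.HeadAtSrc])
      · intro _; exact Or.inl rfl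
      · intro h'; exact absurd (Or.inl hd) h'
  | bwd =>
    obtain ⟨hnsc, w', hsc, he⟩ := (hv : AcyE E y x)
    obtain ⟨l, hw, hp⟩ := bwdChain (H := H) hsc.2 hsc.1
    have hall : ∀ st ∈ l ++ [(⟨w', .bwd, y⟩ : Step V)], st.dir = EDir.bwd := by
      intro st hst
      rcases List.mem_append.mp hst with hst | hst
      · exact (hp st hst).1
      · obtain rfl : st = (⟨w', .bwd, y⟩ : Step V) := by simpa using hst
        rfl
    have hstep : IsWalk E H [⟨w', .bwd, y⟩] w' y := ⟨rfl, he, rfl⟩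
    refine ⟨l ++ [⟨w', .bwd, y⟩], by simp, isWalk_append hw hstep, ?_, ?_⟩
    · refine jOpen_append (jOpen_bwd_base hp) trivial ?_
      intro g f hg hf
      obtain rfl : (⟨w', .bwd, y⟩ : Step V) = f := by simpa using hf
      have hgm := hp g (getLast?_mem' hg)
      refine jsig_of ?_ (Or.inr (hgm.2.2.symm'.trans' hgm.2.1)) (Or.inl (Or.inl rfl))
      rintro ⟨hgd, _⟩
      rcases hgd with h' | h' <;> rw [hgm.1] at h' <;> exact absurd h' (by simp)
    · intro st hst
      have hd := hall st hst
      refine ⟨?_, ?_, ?_, ?_⟩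
      · intro _; exact Or.inl rfl
      · intro h'; exact absurd (Or.inl hd) h'
      · intro h'; exact absurd h' (by simp [Step.HeadAtDst, hd])
      · intro _; exact Or.inr (by simp [Step.HeadAtDst])
  | bi =>
    obtain ⟨hne, hmem⟩ := (hv : x ≠ y ∧ ({x, y} : Set V) ∈ AcyH E H)
    obtain ⟨p, q, hpx, hqy, hpq⟩ := acyH_pair_elim hH hmem
    obtain ⟨l1, hw1, hp1⟩ := bwdChain (H := H) hpx.1 hpx.2
    obtain ⟨l2, hw2, hp2⟩ := fwdChain (H := H) hqy.1 hqy.2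
    have hintra : ∀ st ∈ l1 ++ l2, InSC E st.src st.dst := by
      intro st hst
      rcases List.mem_append.mp hst with hst | hst
      · exact ((hp1 st hst).2.1).symm'.trans' (hp1 st hst).2.2
      · exact ((hp2 st hst).2.1).symm'.trans' (hp2 st hst).2.2
    rcases hpq with rfl | ⟨hpqne, hpqH⟩
    · -- p = q : no bidirected edge needed
      refine ⟨l1 ++ l2, ?_, isWalk_append hw1 hw2, ?_, ?_⟩
      · intro habs
        obtain ⟨h1, h2⟩ := List.append_eq_nil_iff.mp habs
        rw [h1] at hw1; rw [h2] at hw2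
        exact hne ((hw1 : x = p).trans (hw2 : p = y))
      · refine jOpen_append (jOpen_bwd_base hp1) (jOpen_fwd_base hp2) ?_
        intro g f hg hf
        have hgm := hp1 g (getLast?_mem' hg)
        have hfm := hp2 f (head?_mem' hf)
        refine jsig_of ?_ (Or.inr (hgm.2.2.symm'.trans' hgm.2.1))
          (Or.inr (hgm.2.2.symm'.trans' (hpx.symm'.trans' hfm.2.2)))
        rintro ⟨hgd, _⟩
        rcases hgd with h' | h' <;> rw [hgm.1] at h' <;> exact absurd h' (by simp)
      · intro st hst
        exact ⟨fun _ => Or.inr rfl, fun _ => Or.inl (hintra st hst),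
          fun _ => Or.inr rfl, fun _ => Or.inl (hintra st hst)⟩
    · -- p ≠ q : insert the bidirected edge p ↔ q
      have hmid : IsWalk E H (⟨p, .bi, q⟩ :: l2) p y := ⟨rfl, ⟨hpqne, hpqH⟩, hw2⟩
      refine ⟨l1 ++ ⟨p, .bi, q⟩ :: l2, by simp,
        isWalk_append hw1 hmid, ?_, ?_⟩
      · refine jOpen_append (jOpen_bwd_base hp1) ?_ ?_
        · refine jOpen_append (l1 := [⟨p, .bi, q⟩]) trivial (jOpen_fwd_base hp2) ?_
          intro g f hg hf
          obtain rfl : (⟨p, .bi, q⟩ : Step V) = g := by simpa using hg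
          have hfm := hp2 f (head?_mem' hf)
          refine jsig_of ?_ (Or.inl (Or.inr rfl)) (Or.inr hfm.2.2)
          rintro ⟨_, hfs⟩
          rcases hfs with h' | h' <;> rw [hfm.1] at h' <;> exact absurd h' (by simp)
        · intro g f hg hf
          obtain rfl : (⟨p, .bi, q⟩ : Step V) = f := by simpa using hf
          have hgm := hp1 g (getLast?_mem' hg)
          refine jsig_of ?_ (Or.inr (hgm.2.2.symm'.trans' hgm.2.1)) (Or.inl (Or.inr rfl))
          rintro ⟨hgd, _⟩
          rcases hgd with h' | h' <;> rw [hgm.1] at h' <;> exact absurd h' (by simp)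
      · intro st hst
        refine ⟨fun _ => Or.inr rfl, ?_, fun _ => Or.inr rfl, ?_⟩
        · intro hns
          rcases List.mem_append.mp hst with hst | hst
          · exact Or.inl (hintra st (List.mem_append.mpr (Or.inl hst)))
          · rcases List.mem_cons.mp hst with rfl | hst
            · exact absurd (Or.inr rfl) hns
            · exact Or.inl (hintra st (List.mem_append.mpr (Or.inr hst)))
        · intro hnd
          rcases List.mem_append.mp hst with hst | hst
          · exact Or.inl (hintra st (List.mem_append.mpr (Or.inl hst)))
          · rcases List.mem_cons.mp hst with rfl | hst
            · exact absurd (Or.inr rfl) hnd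
            · exact Or.inl (hintra st (List.mem_append.mpr (Or.inr hst)))


/-- Direction B: a d-open walk in the acyclification yields a σ-open walk in `G`. -/
lemma dirB (hH : IsSimplicial H) :
    ∀ (l : List (Step V)) (u y : V), IsWalk (AcyE E) (AcyH E H) l u y →
    JOpen (Jd (AcyE E) Z) l →
    ∃ l', IsWalk E H l' u y ∧ JOpen (Jsig E Z) l' ∧
      ∀ f', l'.head? = some f' → ∃ f, l.head? = some f ∧
        (f'.HeadAtSrc → f.HeadAtSrc) ∧
        (¬ f'.HeadAtSrc → InSC E f'.src f'.dst ∨ ¬ f.HeadAtSrc) := by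
  intro l
  induction l with
  | nil => exact fun u y hw _ => ⟨[], hw, trivial, by simp⟩
  | cons s t ih =>
    intro u y hw hJ
    obtain ⟨hsrc, hval, hwt⟩ := hw
    obtain ⟨l2', hw2, hJ2, hspec2⟩ := ih s.dst y hwt (jOpen_tail hJ)
    obtain ⟨l1, hne1, hw1, hJ1, hprops⟩ := repl_step (Z := Z) hH s hval
    refine ⟨l1 ++ l2', isWalk_append (hsrc ▸ hw1) hw2, ?_, ?_⟩
    · refine jOpen_append hJ1 hJ2 ?_
      intro g f2 hg hf2
      obtain ⟨f, hf, hcomp1, hcomp2⟩ := hspec2 f2 hf2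
      have hJdst : Jd (AcyE E) Z s f := jOpen_cons_head hJ hf
      have hgdst : g.dst = s.dst := isWalk_getLast_dst hw1 hg
      have hf2src : f2.src = s.dst := isWalk_head_src hw2 hf2
      obtain ⟨hp1, hp2, hp3, hp4⟩ := hprops g (getLast?_mem' hg)
      constructor
      · rintro ⟨hgd, hf2s⟩
        have := hJdst.1 ⟨hp3 hgd, hcomp1 hf2s⟩
        rw [hgdst]; exact ancAcy_subset this
      · rintro hnc ⟨hzm, hdisj⟩
        rw [hgdst] at hzm
        rcases hdisj with ⟨hngd, hnin⟩ | ⟨hnf2s, hnin⟩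
        · rcases hp4 hngd with hin | hnsd
          · exact hnin hin.symm'
          · exact (hJdst.2 fun hc => hnsd hc.1) hzm
        · rcases hcomp2 hnf2s with hin | hnts
          · refine hnin ?_
            rw [hgdst, ← hf2src]; exact hin
          · exact (hJdst.2 fun hc => hnts hc.2) hzm
    · intro f' hf'
      obtain ⟨f1, l10, rfl⟩ := List.exists_cons_of_ne_nil hne1
      have he : f1 = f' := by simpa using hf'
      subst he
      obtain ⟨hp1, hp2, -, -⟩ := hprops f1 (List.mem_cons_self)
      exact ⟨s, rfl, hp1, hp2⟩


lemma head?_append_cons {α : Type*} (l1 : List α) (b : α) (l2 l3 : List α) :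
    (l1 ++ b :: l2).head? = (l1 ++ b :: l3).head? := by
  cases l1 <;> simp

lemma split_at_exit :
    ∀ {l : List (Step V)} {u y : V}, IsWalk E H l u y →
    (∀ st ∈ l, InSC E u st.src ∧ InSC E u st.dst) ∨
    ∃ l1 b l2, l = l1 ++ b :: l2 ∧
      (∀ st ∈ l1, InSC E u st.src ∧ InSC E u st.dst) ∧
      InSC E u b.src ∧ ¬ InSC E u b.dst := by
  intro l
  induction l with
  | nil => intro u y _; left; simp
  | cons s t ih =>
    intro u y hw
    obtain ⟨hsrc, hval, hwt⟩ := hw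
    have hins : InSC E u s.src := by rw [hsrc]; exact inSC_refl u
    by_cases hsd : InSC E u s.dst
    · rcases ih hwt with hall | ⟨l1, b, l2, rfl, hintra, hbs, hbd⟩
      · left
        intro st hst
        rcases List.mem_cons.mp hst with rfl | hst
        · exact ⟨hins, hsd⟩
        · obtain ⟨h1, h2⟩ := hall st hst
          exact ⟨hsd.trans' h1, hsd.trans' h2⟩
      · right
        refine ⟨s :: l1, b, l2, rfl, ?_, hsd.trans' hbs, fun h => hbd (hsd.symm'.trans' h)⟩
        intro st hst
        rcases List.mem_cons.mp hst with rfl | hst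
        · exact ⟨hins, hsd⟩
        · obtain ⟨h1, h2⟩ := hintra st hst
          exact ⟨hsd.trans' h1, hsd.trans' h2⟩
    · right
      exact ⟨[], s, t, rfl, by simp, hins, hsd⟩

lemma intra_end {u y : V} :
    ∀ {l : List (Step V)} {a : V}, IsWalk E H l a y →
    (∀ st ∈ l, InSC E u st.src ∧ InSC E u st.dst) → InSC E u a → InSC E u y := by
  intro l
  induction l with
  | nil => intro a hw _ ha; exact (hw : a = y) ▸ ha
  | cons s t ih =>
    intro a hw hall _
    exact ih hw.2.2 (fun st hst => hall st (List.mem_cons_of_mem _ hst))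
      (hall s (List.mem_cons_self)).2

lemma segment_collider (b : Step V) :
    ∀ (l1 : List (Step V)) (u : V),
    IsWalk E H l1 u b.src →
    (∀ st ∈ l1, InSC E u st.src ∧ InSC E u st.dst) →
    JOpen (Jsig E Z) (l1 ++ [b]) →
    (∀ f, (l1 ++ [b]).head? = some f → f.HeadAtSrc → u ∈ AncSet E Z) →
    b.HeadAtSrc →
    ∃ c, InSC E u c ∧ c ∈ AncSet E Z := by
  intro l1
  induction l1 with
  | nil => exact fun u _ _ _ hANC hbs => ⟨u, inSC_refl u, hANC b rfl hbs⟩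
  | cons f t ih =>
    intro u hw hin hJ hANC hbs
    by_cases hfs : f.HeadAtSrc
    · exact ⟨u, inSC_refl u, hANC f rfl hfs⟩
    · have hfd : f.dir = EDir.fwd := by
        rcases hdd : f.dir with _ | _ | _
        · rfl
        · exact absurd (Or.inl hdd) hfs
        · exact absurd (Or.inr hdd) hfs
      have hfdst : f.HeadAtDst := Or.inl hfd
      obtain ⟨hsrc, hval, hwt⟩ := hw
      have hinfd : InSC E u f.dst := (hin f (List.mem_cons_self)).2
      have step : ∀ g, (t ++ [b]).head? = some g → g.HeadAtSrc → f.dst ∈ AncSet E Z := by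
        intro g hg hgs
        exact (jOpen_cons_head (l := t ++ [b]) hJ hg).1 ⟨hfdst, hgs⟩
      obtain ⟨c, hc1, hc2⟩ := ih f.dst hwt
        (fun st hst => ⟨hinfd.symm'.trans' (hin st (List.mem_cons_of_mem _ hst)).1,
          hinfd.symm'.trans' (hin st (List.mem_cons_of_mem _ hst)).2⟩)
        (jOpen_tail hJ) step hbs
      exact ⟨c, hinfd.trans' hc1, hc2⟩


/-- Direction A: a σ-open walk in `G` yields a d-open walk in the acyclification. -/
lemma dirA (hH : IsSimplicial H) :
    ∀ (n : ℕ) (l : List (Step V)) (u y : V), l.length ≤ n →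
    IsWalk E H l u y → JOpen (Jsig E Z) l → y ∉ Z → ∀ ph : Prop,
    (ph → ∀ f, l.head? = some f → f.HeadAtSrc → u ∈ AncSet E Z) →
    (ph → ∀ f, l.head? = some f → ¬ f.HeadAtSrc → ¬ InSC E u f.dst → u ∉ Z) →
    (¬ ph → u ∉ Z) →
    ∃ r l', InSC E u r ∧ (¬ ph → r = u) ∧ IsWalk (AcyE E) (AcyH E H) l' r y ∧
      JOpen (Jd (AcyE E) Z) l' ∧
      (∀ f', l'.head? = some f' →
        (¬ f'.HeadAtSrc → r ∉ Z) ∧ (f'.HeadAtSrc → ph → r ∈ AncSet (AcyE E) Z)) ∧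
      (l' = [] → r = y) := by
  intro n
  induction n with
  | zero =>
    intro l u y hlen hw _ _ ph _ _ _
    have hl : l = [] := List.length_eq_zero_iff.mp (Nat.le_zero.mp hlen)
    subst hl
    have huy : u = y := hw
    subst huy
    exact ⟨u, [], inSC_refl u, fun _ => rfl, rfl, trivial, by simp, fun _ => rfl⟩
  | succ n ih =>
    intro l u y hlen hw hJ hy ph hANC hNZ2 hNZ
    rcases split_at_exit hw with hall | ⟨l1, b, l2, rfl, hintra, hbm, hbout⟩
    · -- (i) the whole walk stays in the SC of u
      have huy : InSC E u y := intra_end hw hall (inSC_refl u)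
      by_cases hph : ph
      · exact ⟨y, [], huy, fun h => absurd hph h, rfl, trivial, by simp, fun _ => rfl⟩
      · by_cases hxy : u = y
        · subst hxy
          exact ⟨u, [], inSC_refl u, fun _ => rfl, rfl, trivial, by simp, fun _ => rfl⟩
        · refine ⟨u, [⟨u, .bi, y⟩], inSC_refl u, fun _ => rfl,
            ⟨rfl, ⟨hxy, pairSC_mem_acyH hH huy⟩, rfl⟩, trivial, ?_, by simp⟩
          intro f' hf'
          obtain rfl : (⟨u, .bi, y⟩ : Step V) = f' := by simpa using hf'
          exact ⟨fun hns => absurd (Or.inr rfl) hns, fun _ hph' => absurd hph' hph⟩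
    · -- (ii) the walk leaves the SC of u
      obtain ⟨m0, hw1, hwb⟩ := isWalk_split hw
      obtain ⟨hbsrc, hbval, hw2⟩ := hwb
      subst hbsrc
      obtain ⟨hJ1, hJb2, hJmid⟩ := jOpen_split (l1 := l1) (l2 := b :: l2) hJ
      have hJ2 : JOpen (Jsig E Z) l2 := jOpen_tail hJb2
      have hum : InSC E u b.src := hbm
      have hnuv : ¬ InSC E u b.dst := hbout
      have hnmv : ¬ InSC E b.dst b.src := fun h => hnuv (hum.trans' h.symm')
      have hnmv' : ¬ InSC E b.src b.dst := fun h => hnuv (hum.trans' h)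
      have hvnz : ¬ b.HeadAtDst → b.dst ∉ Z := by
        intro hnbd
        cases hl2 : l2 with
        | nil =>
          rw [hl2] at hw2
          exact (hw2 : b.dst = y) ▸ hy
        | cons f l2' =>
          have hJbf : Jsig E Z b f := jOpen_cons_head hJb2 (by rw [hl2]; rfl)
          intro hvZ
          exact hJbf.2 (fun hc => hnbd hc.1) ⟨hvZ, Or.inl ⟨hnbd, hnmv⟩⟩
      have hmnz : ¬ b.HeadAtSrc → b.src ∉ Z := by
        intro hnbs
        cases hl1 : l1 with
        | nil =>
          have hub : u = b.src := by rw [hl1] at hw1; exact hw1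
          rw [← hub]
          by_cases hph : ph
          · exact hNZ2 hph b (by rw [hl1]; rfl) hnbs hnuv
          · exact hNZ hph
        | cons a t =>
          obtain ⟨g, hg⟩ : ∃ g, l1.getLast? = some g := by
            rw [hl1]; exact ⟨_, List.getLast?_eq_getLast (by simp)⟩
          have hJgb := hJmid g b hg rfl
          have hgd : g.dst = b.src := isWalk_getLast_dst hw1 hg
          intro hmZ
          refine hJgb.2 (fun hc => hnbs hc.2) ⟨by rw [hgd]; exact hmZ, Or.inr ⟨hnbs, ?_⟩⟩
          rw [hgd]; exact hnmv'
      have hANC' : b.HeadAtDst → ∀ f, l2.head? = some f → f.HeadAtSrc →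
          b.dst ∈ AncSet E Z := by
        intro hbd f hf hfs
        exact (jOpen_cons_head hJb2 hf).1 ⟨hbd, hfs⟩
      have hNZ2' : b.HeadAtDst → ∀ f, l2.head? = some f → ¬ f.HeadAtSrc →
          ¬ InSC E b.dst f.dst → b.dst ∉ Z := by
        intro _ f hf hfs hni hvZ
        exact (jOpen_cons_head hJb2 hf).2 (fun hc => hfs hc.2) ⟨hvZ, Or.inr ⟨hfs, hni⟩⟩
      have hlen2 : l2.length ≤ n := by
        simp only [List.length_append, List.length_cons] at hlen
        omega
      obtain ⟨r2, l2', hr2, hpin2, hw2', hJ2', hspec2, hnil2⟩ :=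
        ih l2 b.dst y hlen2 hw2 hJ2 hy b.HeadAtDst hANC' hNZ2' hvnz
      have hnur2 : ¬ InSC E u r2 := fun h => hnuv (h.trans' hr2.symm')
      have hJcons : ∀ b' : Step V, b'.dir = b.dir → b'.dst = r2 →
          JOpen (Jd (AcyE E) Z) (b' :: l2') := by
        intro b' hdir hdst
        cases hl2' : l2' with
        | nil => trivial
        | cons f2 t2 =>
          refine ⟨⟨?_, ?_⟩, by rw [hl2'] at hJ2'; exact hJ2'⟩
          · rintro ⟨hbdh, hfs⟩
            have hbhd : b.HeadAtDst := by
              have : b'.dir = EDir.fwd ∨ b'.dir = EDir.bi := hbdh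
              rw [hdir] at this; exact this
            rw [hdst]
            exact (hspec2 f2 (by rw [hl2']; rfl)).2 hfs hbhd
          · intro hnc
            by_cases hfs : f2.HeadAtSrc
            · have hnbd : ¬ b'.HeadAtDst := fun h => hnc ⟨h, hfs⟩
              have hnbhd : ¬ b.HeadAtDst := by
                intro h
                have : b'.dir = EDir.fwd ∨ b'.dir = EDir.bi := by
                  rw [hdir]; exact h
                exact hnbd this
              rw [hdst, hpin2 hnbhd]
              exact hvnz hnbhd
            · rw [hdst]
              exact (hspec2 f2 (by rw [hl2']; rfl)).1 hfs
      obtain ⟨bs, bd, bv⟩ := b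
      simp only at hum hnuv hnmv hnmv' hvnz hmnz hr2 hw2 hw1 hnur2
      cases bd with
      | fwd =>
        have hbvalE : E bs bv := hbval
        have hnbs : ¬ (Step.mk bs EDir.fwd bv).HeadAtSrc := by
          rintro (h | h) <;> simp at h
        have hmZ : bs ∉ Z := hmnz hnbs
        have hb'val : AcyE E bs r2 :=
          ⟨fun h => hnuv (hum.trans' (h.trans' hr2.symm')), bv, hr2.symm', hbvalE⟩
        have hwalk : IsWalk (AcyE E) (AcyH E H) (⟨bs, .fwd, r2⟩ :: l2') bs y :=
          ⟨rfl, hb'val, hw2'⟩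
        have hjo : JOpen (Jd (AcyE E) Z) (⟨bs, .fwd, r2⟩ :: l2') :=
          hJcons _ rfl rfl
        by_cases hph : ph
        · refine ⟨bs, ⟨bs, .fwd, r2⟩ :: l2', hum, fun h => absurd hph h,
            hwalk, hjo, ?_, by simp⟩
          intro f' hf'
          obtain rfl : (⟨bs, .fwd, r2⟩ : Step V) = f' := by simpa using hf'
          refine ⟨fun _ => hmZ, fun hfs _ => ?_⟩
          rcases hfs with h | h <;> simp at h
        · have huZ : u ∉ Z := hNZ hph
          by_cases hue : u = bs
          · refine ⟨u, ⟨bs, .fwd, r2⟩ :: l2', by rw [hue]; exact inSC_refl bs,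
              fun _ => rfl, by rw [hue]; exact hwalk, hjo, ?_, by simp⟩
            intro f' hf'
            obtain rfl : (⟨bs, .fwd, r2⟩ : Step V) = f' := by simpa using hf'
            exact ⟨fun _ => huZ, fun _ h => absurd h hph⟩
          · have hbiv : Step.Valid (AcyE E) (AcyH E H) ⟨u, .bi, bs⟩ :=
              ⟨hue, pairSC_mem_acyH hH hum⟩
            refine ⟨u, ⟨u, .bi, bs⟩ :: ⟨bs, .fwd, r2⟩ :: l2', inSC_refl u,
              fun _ => rfl, ⟨rfl, hbiv, hwalk⟩, ⟨⟨?_, fun _ => hmZ⟩, hjo⟩, ?_, by simp⟩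
            · rintro ⟨-, hfs⟩
              rcases hfs with h | h <;> simp at h
            · intro f' hf'
              obtain rfl : (⟨u, .bi, bs⟩ : Step V) = f' := by simpa using hf'
              exact ⟨fun hns => absurd (Or.inr rfl) hns, fun _ h => absurd h hph⟩
      | bwd =>
        have hbvalE : E bv bs := hbval
        have hbs : (Step.mk bs EDir.bwd bv).HeadAtSrc := Or.inl rfl
        have hnbd : ¬ (Step.mk bs EDir.bwd bv).HeadAtDst := by
          rintro (h | h) <;> simp at h
        have hr2v : r2 = bv := hpin2 hnbd
        by_cases hph : ph
        · have hJ1b : JOpen (Jsig E Z) (l1 ++ [⟨bs, .bwd, bv⟩]) := by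
            refine jOpen_append hJ1 trivial ?_
            intro g f hg hf
            obtain rfl : (⟨bs, .bwd, bv⟩ : Step V) = f := by simpa using hf
            exact hJmid g _ hg rfl
          have hANCseg : ∀ f, (l1 ++ [(⟨bs, .bwd, bv⟩ : Step V)]).head? = some f →
              f.HeadAtSrc → u ∈ AncSet E Z := by
            intro f hf hfs
            refine hANC hph f ?_ hfs
            rw [head?_append_cons l1 _ l2 []]; exact hf
          obtain ⟨c, hc1, hc2⟩ := segment_collider _ l1 u hw1 hintra hJ1b hANCseg hbs
          obtain ⟨sr, hcs, hsAnc⟩ := anc_to_acy hc2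
          have husr : InSC E u sr := hc1.trans' hcs
          have hb'val : Step.Valid (AcyE E) (AcyH E H) ⟨sr, .bwd, r2⟩ := by
            show AcyE E r2 sr
            rw [hr2v]
            exact ⟨fun h => hnuv (husr.trans' h.symm'), bs, husr.symm'.trans' hum, hbvalE⟩
          refine ⟨sr, ⟨sr, .bwd, r2⟩ :: l2', husr, fun h => absurd hph h,
            ⟨rfl, hb'val, hw2'⟩, hJcons _ rfl rfl, ?_, by simp⟩
          intro f' hf'
          obtain rfl : (⟨sr, .bwd, r2⟩ : Step V) = f' := by simpa using hf'
          exact ⟨fun hns => absurd (Or.inl rfl) hns, fun _ _ => hsAnc⟩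
        · have hb'val : Step.Valid (AcyE E) (AcyH E H) ⟨u, .bwd, r2⟩ := by
            show AcyE E r2 u
            rw [hr2v]
            exact ⟨fun h => hnuv h.symm', bs, hum, hbvalE⟩
          refine ⟨u, ⟨u, .bwd, r2⟩ :: l2', inSC_refl u, fun _ => rfl,
            ⟨rfl, hb'val, hw2'⟩, hJcons _ rfl rfl, ?_, by simp⟩
          intro f' hf'
          obtain rfl : (⟨u, .bwd, r2⟩ : Step V) = f' := by simpa using hf'
          exact ⟨fun hns => absurd (Or.inl rfl) hns, fun _ h => absurd h hph⟩
      | bi =>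
        have hbvalE : bs ≠ bv ∧ ({bs, bv} : Set V) ∈ H := hbval
        have hbs : (Step.mk bs EDir.bi bv).HeadAtSrc := Or.inr rfl
        by_cases hph : ph
        · have hJ1b : JOpen (Jsig E Z) (l1 ++ [⟨bs, .bi, bv⟩]) := by
            refine jOpen_append hJ1 trivial ?_
            intro g f hg hf
            obtain rfl : (⟨bs, .bi, bv⟩ : Step V) = f := by simpa using hf
            exact hJmid g _ hg rfl
          have hANCseg : ∀ f, (l1 ++ [(⟨bs, .bi, bv⟩ : Step V)]).head? = some f →
              f.HeadAtSrc → u ∈ AncSet E Z := by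
            intro f hf hfs
            refine hANC hph f ?_ hfs
            rw [head?_append_cons l1 _ l2 []]; exact hf
          obtain ⟨c, hc1, hc2⟩ := segment_collider _ l1 u hw1 hintra hJ1b hANCseg hbs
          obtain ⟨sr, hcs, hsAnc⟩ := anc_to_acy hc2
          have husr : InSC E u sr := hc1.trans' hcs
          have hb'val : Step.Valid (AcyE E) (AcyH E H) ⟨sr, .bi, r2⟩ := by
            refine ⟨fun h => hnuv (husr.trans' (by rw [show sr = r2 from h]; exact hr2.symm')), ?_⟩
            exact pair_mem_acyH hH hbvalE.2 (hum.symm'.trans' husr) hr2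
          refine ⟨sr, ⟨sr, .bi, r2⟩ :: l2', husr, fun h => absurd hph h,
            ⟨rfl, hb'val, hw2'⟩, hJcons _ rfl rfl, ?_, by simp⟩
          intro f' hf'
          obtain rfl : (⟨sr, .bi, r2⟩ : Step V) = f' := by simpa using hf'
          exact ⟨fun hns => absurd (Or.inr rfl) hns, fun _ _ => hsAnc⟩
        · have hb'val : Step.Valid (AcyE E) (AcyH E H) ⟨u, .bi, r2⟩ := by
            refine ⟨fun h => hnur2 (by rw [← show u = r2 from h]; exact inSC_refl u), ?_⟩
            exact pair_mem_acyH hH hbvalE.2 hum.symm' hr2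
          refine ⟨u, ⟨u, .bi, r2⟩ :: l2', inSC_refl u, fun _ => rfl,
            ⟨rfl, hb'val, hw2'⟩, hJcons _ rfl rfl, ?_, by simp⟩
          intro f' hf'
          obtain rfl : (⟨u, .bi, r2⟩ : Step V) = f' := by simpa using hf'
          exact ⟨fun hns => absurd (Or.inr rfl) hns, fun _ h => absurd h hph⟩

end Stmt14





/-- σ-separation in a HEDG `G` is equivalent to d-separation in its
acyclification `G^acy`. -/
theorem sigmaSep_iff_dSep_acyclification {V : Type*} [Fintype V]
    (E : V → V → Prop) (H : Set (Set V)) (hH : IsSimplicial H) (X Y Z : Set V) :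
    SigmaSep E H X Y Z ↔ DSep (AcyE E) (AcyH E H) X Y Z := by
  constructor
  · intro hs x hx y hy l hw hopen
    obtain ⟨hxZ, hyZ, hop⟩ := hopen
    obtain ⟨l', hw', hJ', -⟩ := dirB hH l x y hw (dOpen_iff.mp hop)
    exact hs x hx y hy l' hw' ⟨hxZ, hyZ, sigmaOpen_iff.mpr hJ'⟩
  · intro hd x hx y hy l hw hopen
    obtain ⟨hxZ, hyZ, hop⟩ := hopen
    obtain ⟨r, l', -, hpin, hw', hJ', -, -⟩ :=
      dirA hH l.length l x y le_rfl hw (sigmaOpen_iff.mp hop) hyZ False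
        (fun h => h.elim) (fun h => h.elim) (fun _ => hxZ)
    have hr : r = x := hpin not_false
    exact hd x hx y hy l' (hr ▸ hw') ⟨hxZ, hyZ, dOpen_iff.mpr hJ'⟩

end HedgPaper
end
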